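/- A simple graph G is a stabbable grid intersection graph if and only if G has a grid intersection representation such that the line y = x intersects every segment of the representation, every segment meets this line in a point (r,r) with r an integer, and every intersection point of two distinct segments of the representation has integer coordinates. -/

import Mathlib

open Set

/-- An axis-parallel closed segment: horizontal (`horiz = true`) with y-coordinate `c` and
x-range `[lo, hi]`, or vertical (`horiz = false`) with x-coordinate `c` and y-range `[lo, hi]`. -/
def gridSeg (horiz : Bool) (c lo hi : ℝ) : Set (ℝ × ℝ) :=
  if horiz then {q | q.2 = c ∧ lo ≤ q.1 ∧ q.1 ≤ hi}
  else {q | q.1 = c ∧ lo ≤ q.2 ∧ q.2 ≤ hi}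

/-- A grid intersection representation of a simple graph `G`: each vertex gets a
non-degenerate axis-parallel closed segment, segments of the same orientation are disjoint,
and two distinct vertices are adjacent iff their segments intersect. -/
structure GridRep {V : Type*} (G : SimpleGraph V) where
  horiz : V → Bool
  c : V → ℝ
  lo : V → ℝ
  hi : V → ℝ
  lo_lt_hi : ∀ v, lo v < hi v
  same_disjoint : ∀ u v : V, u ≠ v → horiz u = horiz v →
    gridSeg (horiz u) (c u) (lo u) (hi u) ∩ gridSeg (horiz v) (c v) (lo v) (hi v) = ∅
  adj_iff : ∀ u v : V, u ≠ v →
    (G.Adj u v ↔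
      (gridSeg (horiz u) (c u) (lo u) (hi u) ∩ gridSeg (horiz v) (c v) (lo v) (hi v)).Nonempty)

/-- The segment assigned to vertex `v` by a grid intersection representation. -/
def GridRep.seg {V : Type*} {G : SimpleGraph V} (R : GridRep G) (v : V) : Set (ℝ × ℝ) :=
  gridSeg (R.horiz v) (R.c v) (R.lo v) (R.hi v)

/-- A simple graph is a stabbable grid intersection graph if it has a grid intersection
representation in which some straight line (with equation `a*x + b*y = k`, `(a,b) ≠ (0,0)`)
meets every segment. -/
def IsStabGIG {V : Type*} (G : SimpleGraph V) : Prop :=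
  ∃ R : GridRep G, ∃ a b k : ℝ, (a ≠ 0 ∨ b ≠ 0) ∧
    ∀ v : V, ∃ q ∈ R.seg v, a * q.1 + b * q.2 = k

section Helpers

lemma mem_gridSeg_true {c lo hi : ℝ} {q : ℝ × ℝ} :
    q ∈ gridSeg true c lo hi ↔ q.2 = c ∧ lo ≤ q.1 ∧ q.1 ≤ hi := by
  simp [gridSeg]

lemma mem_gridSeg_false {c lo hi : ℝ} {q : ℝ × ℝ} :
    q ∈ gridSeg false c lo hi ↔ q.1 = c ∧ lo ≤ q.2 ∧ q.2 ≤ hi := by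
  simp [gridSeg]

lemma inter_hv {c1 l1 h1 c2 l2 h2 : ℝ} :
    (gridSeg true c1 l1 h1 ∩ gridSeg false c2 l2 h2).Nonempty ↔
      (l1 ≤ c2 ∧ c2 ≤ h1) ∧ (l2 ≤ c1 ∧ c1 ≤ h2) := by
  constructor
  · rintro ⟨q, hq1, hq2⟩
    rw [mem_gridSeg_true] at hq1
    rw [mem_gridSeg_false] at hq2
    obtain ⟨e1, e2, e3⟩ := hq1
    obtain ⟨f1, f2, f3⟩ := hq2
    subst e1; subst f1
    exact ⟨⟨e2, e3⟩, f2, f3⟩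
  · rintro ⟨⟨h1', h2'⟩, h3', h4'⟩
    exact ⟨(c2, c1), mem_gridSeg_true.2 ⟨rfl, h1', h2'⟩,
      mem_gridSeg_false.2 ⟨rfl, h3', h4'⟩⟩

lemma inter_same_true {c1 l1 h1 c2 l2 h2 : ℝ} (H1 : l1 ≤ h1) (H2 : l2 ≤ h2) :
    (gridSeg true c1 l1 h1 ∩ gridSeg true c2 l2 h2).Nonempty ↔
      c1 = c2 ∧ l1 ≤ h2 ∧ l2 ≤ h1 := by
  constructor
  · rintro ⟨q, hq1, hq2⟩
    rw [mem_gridSeg_true] at hq1 hq2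
    obtain ⟨e1, e2, e3⟩ := hq1
    obtain ⟨f1, f2, f3⟩ := hq2
    exact ⟨e1 ▸ f1 ▸ rfl, le_trans e2 f3, le_trans f2 e3⟩
  · rintro ⟨rfl, h3', h4'⟩
    refine ⟨(max l1 l2, c1), mem_gridSeg_true.2 ⟨rfl, le_max_left _ _, max_le H1 h4'⟩,
      mem_gridSeg_true.2 ⟨rfl, le_max_right _ _, max_le h3' H2⟩⟩

lemma inter_same_false {c1 l1 h1 c2 l2 h2 : ℝ} (H1 : l1 ≤ h1) (H2 : l2 ≤ h2) :
    (gridSeg false c1 l1 h1 ∩ gridSeg false c2 l2 h2).Nonempty ↔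
      c1 = c2 ∧ l1 ≤ h2 ∧ l2 ≤ h1 := by
  constructor
  · rintro ⟨q, hq1, hq2⟩
    rw [mem_gridSeg_false] at hq1 hq2
    obtain ⟨e1, e2, e3⟩ := hq1
    obtain ⟨f1, f2, f3⟩ := hq2
    exact ⟨e1 ▸ f1 ▸ rfl, le_trans e2 f3, le_trans f2 e3⟩
  · rintro ⟨rfl, h3', h4'⟩
    refine ⟨(c1, max l1 l2), mem_gridSeg_false.2 ⟨rfl, le_max_left _ _, max_le H1 h4'⟩,
      mem_gridSeg_false.2 ⟨rfl, le_max_right _ _, max_le h3' H2⟩⟩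

lemma inter_same {b : Bool} {c1 l1 h1 c2 l2 h2 : ℝ} (H1 : l1 ≤ h1) (H2 : l2 ≤ h2) :
    (gridSeg b c1 l1 h1 ∩ gridSeg b c2 l2 h2).Nonempty ↔
      c1 = c2 ∧ l1 ≤ h2 ∧ l2 ≤ h1 := by
  cases b
  · exact inter_same_false H1 H2
  · exact inter_same_true H1 H2

end Helpers

section Affine

variable {α β : ℝ}

lemma aff_le_pos (hα : 0 < α) {x y : ℝ} : α * x + β ≤ α * y + β ↔ x ≤ y := by
  constructor <;> intro h <;> nlinarith

lemma aff_le_neg (hα : α < 0) {x y : ℝ} : α * x + β ≤ α * y + β ↔ y ≤ x := by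
  constructor <;> intro h <;> nlinarith

lemma aff_inj (hα : α ≠ 0) {x y : ℝ} (h : α * x + β = α * y + β) : x = y :=
  mul_left_cancel₀ hα (add_right_cancel h)

lemma aff_mem_iff (hα : α ≠ 0) {lo hi t : ℝ} (hlh : lo ≤ hi) :
    (min (α * lo + β) (α * hi + β) ≤ α * t + β ∧
      α * t + β ≤ max (α * lo + β) (α * hi + β)) ↔ lo ≤ t ∧ t ≤ hi := by
  rcases hα.lt_or_gt with h | h
  · rw [min_eq_right ((aff_le_neg h).2 hlh), max_eq_left ((aff_le_neg h).2 hlh),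
      aff_le_neg h, aff_le_neg h]
    exact and_comm
  · rw [min_eq_left ((aff_le_pos h).2 hlh), max_eq_right ((aff_le_pos h).2 hlh),
      aff_le_pos h, aff_le_pos h]

lemma aff_overlap_iff (hα : α ≠ 0) {lo hi lo' hi' : ℝ} (h1 : lo ≤ hi) (h2 : lo' ≤ hi') :
    (min (α * lo + β) (α * hi + β) ≤ max (α * lo' + β) (α * hi' + β) ∧
      min (α * lo' + β) (α * hi' + β) ≤ max (α * lo + β) (α * hi + β)) ↔
      (lo ≤ hi' ∧ lo' ≤ hi) := by
  rcases hα.lt_or_gt with h | h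
  · rw [min_eq_right ((aff_le_neg h).2 h1), max_eq_left ((aff_le_neg h).2 h1),
      min_eq_right ((aff_le_neg h).2 h2), max_eq_left ((aff_le_neg h).2 h2),
      aff_le_neg h, aff_le_neg h]
    exact and_comm
  · rw [min_eq_left ((aff_le_pos h).2 h1), max_eq_right ((aff_le_pos h).2 h1),
      min_eq_left ((aff_le_pos h).2 h2), max_eq_right ((aff_le_pos h).2 h2),
      aff_le_pos h, aff_le_pos h]

lemma aff_lt_minmax (hα : α ≠ 0) {lo hi : ℝ} (h1 : lo < hi) :
    min (α * lo + β) (α * hi + β) < max (α * lo + β) (α * hi + β) := by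
  rcases hα.lt_or_gt with h | h
  · have : α * hi + β < α * lo + β := by nlinarith
    rw [min_eq_right this.le, max_eq_left this.le]; exact this
  · have : α * lo + β < α * hi + β := by nlinarith
    rw [min_eq_left this.le, max_eq_right this.le]; exact this

end Affine

lemma inter_vh {c1 l1 h1 c2 l2 h2 : ℝ} :
    (gridSeg false c1 l1 h1 ∩ gridSeg true c2 l2 h2).Nonempty ↔
      (l2 ≤ c1 ∧ c1 ≤ h2) ∧ (l1 ≤ c2 ∧ c2 ≤ h1) := by
  rw [Set.inter_comm]; exact inter_hv

lemma exists_int_diag {V : Type*} [Fintype V] {G : SimpleGraph V} (R : GridRep G)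
    (hd : ∀ v, R.lo v ≤ R.c v ∧ R.c v ≤ R.hi v) :
    ∃ R' : GridRep G, (∀ v, R'.lo v ≤ R'.c v ∧ R'.c v ≤ R'.hi v) ∧
      ∀ v, ∃ m : ℤ, R'.c v = m := by
  classical
  set S : Finset ℝ :=
    Finset.univ.image R.c ∪ Finset.univ.image R.lo ∪ Finset.univ.image R.hi with hS
  set ψ : ℝ → ℝ := fun x => ((S.filter (fun s => s ≤ x)).card : ℝ) with hψ
  have mono : ∀ {x y : ℝ}, x ≤ y → ψ x ≤ ψ y := by
    intro x y h
    have : (S.filter (fun s => s ≤ x)) ⊆ (S.filter (fun s => s ≤ y)) := by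
      intro s hs
      rw [Finset.mem_filter] at *
      exact ⟨hs.1, hs.2.trans h⟩
    simp only [hψ]
    exact_mod_cast Finset.card_le_card this
  have strict : ∀ {x y : ℝ}, y ∈ S → x < y → ψ x < ψ y := by
    intro x y hy h
    have hsub : (S.filter (fun s => s ≤ x)) ⊆ (S.filter (fun s => s ≤ y)) := by
      intro s hs
      rw [Finset.mem_filter] at *
      exact ⟨hs.1, hs.2.trans h.le⟩
    have : (S.filter (fun s => s ≤ x)) ⊂ (S.filter (fun s => s ≤ y)) := by
      rw [Finset.ssubset_iff_of_subset hsub]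
      exact ⟨y, Finset.mem_filter.2 ⟨hy, le_rfl⟩, fun hc =>
        absurd (Finset.mem_filter.1 hc).2 (not_le.2 h)⟩
    simp only [hψ]
    exact_mod_cast Finset.card_lt_card this
  have le_rev : ∀ {x y : ℝ}, x ∈ S → ψ x ≤ ψ y → x ≤ y := by
    intro x y hx h
    by_contra hc
    push_neg at hc
    exact absurd h (not_le.2 (strict hx hc))
  have eq_rev : ∀ {x y : ℝ}, x ∈ S → y ∈ S → ψ x = ψ y → x = y := by
    intro x y hx hy h
    exact le_antisymm (le_rev hx h.le) (le_rev hy h.ge)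
  have memc : ∀ v, R.c v ∈ S := fun v => by
    rw [hS]
    exact Finset.mem_union_left _ (Finset.mem_union_left _
      (Finset.mem_image_of_mem _ (Finset.mem_univ v)))
  have memlo : ∀ v, R.lo v ∈ S := fun v => by
    rw [hS]
    exact Finset.mem_union_left _ (Finset.mem_union_right _
      (Finset.mem_image_of_mem _ (Finset.mem_univ v)))
  have memhi : ∀ v, R.hi v ∈ S := fun v => by
    rw [hS]
    exact Finset.mem_union_right _ (Finset.mem_image_of_mem _ (Finset.mem_univ v))
  have lolehi : ∀ v, ψ (R.lo v) ≤ ψ (R.hi v) := fun v => mono (R.lo_lt_hi v).le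
  refine ⟨⟨R.horiz, fun v => ψ (R.c v), fun v => ψ (R.lo v), fun v => ψ (R.hi v),
    fun v => strict (memhi v) (R.lo_lt_hi v), ?_, ?_⟩,
    fun v => ⟨mono (hd v).1, mono (hd v).2⟩,
    fun v => ⟨(S.filter (fun s => s ≤ R.c v)).card, by push_cast [hψ]; ring⟩⟩
  · intro u v huv he
    beta_reduce
    rw [← Set.not_nonempty_iff_eq_empty, he, inter_same (lolehi u) (lolehi v)]
    rintro ⟨h1, h2, h3⟩
    have hold := R.same_disjoint u v huv he
    rw [← Set.not_nonempty_iff_eq_empty, he,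
      inter_same (R.lo_lt_hi u).le (R.lo_lt_hi v).le] at hold
    exact hold ⟨eq_rev (memc u) (memc v) h1, le_rev (memlo u) h2, le_rev (memlo v) h3⟩
  · intro u v huv
    beta_reduce
    rw [R.adj_iff u v huv]
    by_cases he : R.horiz u = R.horiz v
    · rw [he, inter_same (R.lo_lt_hi u).le (R.lo_lt_hi v).le,
        inter_same (lolehi u) (lolehi v)]
      constructor
      · rintro ⟨h1, h2, h3⟩
        exact ⟨by rw [h1], mono h2, mono h3⟩
      · rintro ⟨h1, h2, h3⟩
        exact ⟨eq_rev (memc u) (memc v) h1, le_rev (memlo u) h2, le_rev (memlo v) h3⟩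
    · rcases Bool.eq_false_or_eq_true (R.horiz u) with hu | hu <;>
        rcases Bool.eq_false_or_eq_true (R.horiz v) with hv | hv
      · exact absurd (hu.trans hv.symm) he
      · rw [hu, hv, inter_hv, inter_hv]
        constructor
        · rintro ⟨⟨h1, h2⟩, h3, h4⟩
          exact ⟨⟨mono h1, mono h2⟩, mono h3, mono h4⟩
        · rintro ⟨⟨h1, h2⟩, h3, h4⟩
          exact ⟨⟨le_rev (memlo u) h1, le_rev (memc v) h2⟩,
            le_rev (memlo v) h3, le_rev (memc u) h4⟩
      · rw [hu, hv, inter_vh, inter_vh]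
        constructor
        · rintro ⟨⟨h1, h2⟩, h3, h4⟩
          exact ⟨⟨mono h1, mono h2⟩, mono h3, mono h4⟩
        · rintro ⟨⟨h1, h2⟩, h3, h4⟩
          exact ⟨⟨le_rev (memlo v) h1, le_rev (memc u) h2⟩,
            le_rev (memlo u) h3, le_rev (memc v) h4⟩
      · exact absurd (hu.trans hv.symm) he

lemma stab_to_diag {V : Type*} [Fintype V] {G : SimpleGraph V} (h : IsStabGIG G) :
    ∃ R : GridRep G, ∀ v, R.lo v ≤ R.c v ∧ R.c v ≤ R.hi v := by
  classical
  obtain ⟨R, a, b, k, hab, hstab⟩ := h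
  by_cases hb : b = 0
  · -- vertical stabbing line x = k / a
    have ha : a ≠ 0 := hab.resolve_right (fun h => h hb)
    subst hb
    set s : ℝ := k / a with hs
    have hvert : ∀ v, R.horiz v = false → R.c v = s := by
      intro v hv
      obtain ⟨q, hq, hlin⟩ := hstab v
      rw [GridRep.seg, hv, mem_gridSeg_false] at hq
      rw [hs, eq_div_iff ha]
      linear_combination hlin - a * hq.1
    have hhor : ∀ v, R.horiz v = true → R.lo v ≤ s ∧ s ≤ R.hi v := by
      intro v hv
      obtain ⟨q, hq, hlin⟩ := hstab v
      rw [GridRep.seg, hv, mem_gridSeg_true] at hq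
      have : q.1 = s := by
        rw [hs, eq_div_iff ha]
        linear_combination hlin
      exact ⟨this ▸ hq.2.1, this ▸ hq.2.2⟩
    set f : V → ℝ := fun v => bif R.horiz v then R.c v else R.lo v with hf
    have hfin : (insert (0:ℝ) (Set.range f)).Finite := (Set.finite_range f).insert 0
    set m : ℝ := sInf (insert (0:ℝ) (Set.range f)) - 1 with hm
    set M : ℝ := sSup (insert (0:ℝ) (Set.range f)) + 1 with hM
    have hmf : ∀ v, m ≤ f v ∧ f v ≤ M := by
      intro v
      have h1 := csInf_le hfin.bddBelow (Set.mem_insert_iff.2 (Or.inr ⟨v, rfl⟩))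
      have h2 := le_csSup hfin.bddAbove (Set.mem_insert_iff.2 (Or.inr ⟨v, rfl⟩))
      constructor
      · rw [hm]; linarith
      · rw [hM]; linarith
    have hmM : m < M := by
      have h0 := csInf_le_csSup (Set.insert_nonempty 0 (Set.range f))
        hfin.bddBelow hfin.bddAbove
      rw [hm, hM]; linarith
    have hmc : ∀ v, R.horiz v = true → m ≤ R.c v ∧ R.c v ≤ M := by
      intro v hv
      have h1 := hmf v
      simp only [hf, hv, Bool.cond_true] at h1
      exact h1
    have hmlo : ∀ v, R.horiz v = false → m ≤ R.lo v ∧ R.lo v ≤ M := by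
      intro v hv
      have h1 := hmf v
      simp only [hf, hv, Bool.cond_false] at h1
      exact h1
    set c' : V → ℝ := fun v => bif R.horiz v then R.c v else R.lo v with hc'
    set lo' : V → ℝ := fun v => bif R.horiz v then m else R.lo v with hlo'
    set hi' : V → ℝ := fun v => bif R.horiz v then M else R.hi v with hhi'
    have hlth : ∀ v, lo' v < hi' v := by
      intro v
      rcases Bool.eq_false_or_eq_true (R.horiz v) with hv | hv
      · simp only [hlo', hhi', hv, Bool.cond_true]
        exact hmM
      · simp only [hlo', hhi', hv, Bool.cond_false]
        exact R.lo_lt_hi v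
    have nd : ∀ u v : V, u ≠ v → R.horiz u = R.horiz v →
        gridSeg (R.horiz u) (c' u) (lo' u) (hi' u) ∩
          gridSeg (R.horiz v) (c' v) (lo' v) (hi' v) = ∅ := by
      intro u v huv he
      have old := R.same_disjoint u v huv he
      rw [← Set.not_nonempty_iff_eq_empty] at old ⊢
      rcases Bool.eq_false_or_eq_true (R.horiz u) with hu | hu
      · have hv : R.horiz v = true := he.symm.trans hu
        rw [hu, hv] at old
        simp only [hc', hlo', hhi', hu, hv, Bool.cond_true]
        rw [inter_same hmM.le hmM.le]
        rintro ⟨h1, -, -⟩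
        exact old ⟨(s, R.c u), mem_gridSeg_true.2 ⟨rfl, (hhor u hu).1, (hhor u hu).2⟩,
          mem_gridSeg_true.2 ⟨h1, (hhor v hv).1, (hhor v hv).2⟩⟩
      · have hv : R.horiz v = false := he.symm.trans hu
        rw [hu, hv, inter_same (R.lo_lt_hi u).le (R.lo_lt_hi v).le] at old
        simp only [hc', hlo', hhi', hu, hv, Bool.cond_false]
        rw [inter_same (R.lo_lt_hi u).le (R.lo_lt_hi v).le]
        rintro ⟨-, h2, h3⟩
        exact old ⟨(hvert u hu).trans (hvert v hv).symm, h2, h3⟩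
    refine ⟨⟨R.horiz, c', lo', hi', hlth, nd, ?_⟩, ?_⟩
    · intro u v huv
      rw [R.adj_iff u v huv]
      rcases Bool.eq_false_or_eq_true (R.horiz u) with hu | hu <;>
        rcases Bool.eq_false_or_eq_true (R.horiz v) with hv | hv
      · have e1 := R.same_disjoint u v huv (hu.trans hv.symm)
        have e2 := nd u v huv (hu.trans hv.symm)
        rw [← Set.not_nonempty_iff_eq_empty] at e1 e2
        exact iff_of_false e1 e2
      · simp only [hc', hlo', hhi', hu, hv, Bool.cond_false, Bool.cond_true]
        rw [inter_hv, inter_hv]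
        constructor
        · rintro ⟨-, h3, h4⟩
          exact ⟨⟨(hmlo v hv).1, (hmlo v hv).2⟩, h3, h4⟩
        · rintro ⟨-, h3, h4⟩
          refine ⟨⟨?_, ?_⟩, h3, h4⟩
          · rw [hvert v hv]; exact (hhor u hu).1
          · rw [hvert v hv]; exact (hhor u hu).2
      · simp only [hc', hlo', hhi', hu, hv, Bool.cond_false, Bool.cond_true]
        rw [inter_vh, inter_vh]
        constructor
        · rintro ⟨-, h3, h4⟩
          exact ⟨⟨(hmlo u hu).1, (hmlo u hu).2⟩, h3, h4⟩
        · rintro ⟨-, h3, h4⟩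
          refine ⟨⟨?_, ?_⟩, h3, h4⟩
          · rw [hvert u hu]; exact (hhor v hv).1
          · rw [hvert u hu]; exact (hhor v hv).2
      · have e1 := R.same_disjoint u v huv (hu.trans hv.symm)
        have e2 := nd u v huv (hu.trans hv.symm)
        rw [← Set.not_nonempty_iff_eq_empty] at e1 e2
        exact iff_of_false e1 e2
    · intro v
      rcases Bool.eq_false_or_eq_true (R.horiz v) with hv | hv
      · simp only [hc', hlo', hhi', hv, Bool.cond_true]
        exact hmc v hv
      · simp only [hc', hlo', hhi', hv, Bool.cond_false]
        exact ⟨le_rfl, (R.lo_lt_hi v).le⟩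
  · by_cases haz : a = 0
    · -- horizontal stabbing line y = k / b
      subst haz
      set t : ℝ := k / b with ht
      have hhor : ∀ v, R.horiz v = true → R.c v = t := by
        intro v hv
        obtain ⟨q, hq, hlin⟩ := hstab v
        rw [GridRep.seg, hv, mem_gridSeg_true] at hq
        rw [ht, eq_div_iff hb]
        linear_combination hlin - b * hq.1
      have hvert : ∀ v, R.horiz v = false → R.lo v ≤ t ∧ t ≤ R.hi v := by
        intro v hv
        obtain ⟨q, hq, hlin⟩ := hstab v
        rw [GridRep.seg, hv, mem_gridSeg_false] at hq
        have : q.2 = t := by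
          rw [ht, eq_div_iff hb]
          linear_combination hlin
        exact ⟨this ▸ hq.2.1, this ▸ hq.2.2⟩
      set f : V → ℝ := fun v => bif R.horiz v then R.lo v else R.c v with hf
      have hfin : (insert (0:ℝ) (Set.range f)).Finite := (Set.finite_range f).insert 0
      set m : ℝ := sInf (insert (0:ℝ) (Set.range f)) - 1 with hm
      set M : ℝ := sSup (insert (0:ℝ) (Set.range f)) + 1 with hM
      have hmf : ∀ v, m ≤ f v ∧ f v ≤ M := by
        intro v
        have h1 := csInf_le hfin.bddBelow (Set.mem_insert_iff.2 (Or.inr ⟨v, rfl⟩))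
        have h2 := le_csSup hfin.bddAbove (Set.mem_insert_iff.2 (Or.inr ⟨v, rfl⟩))
        constructor
        · rw [hm]; linarith
        · rw [hM]; linarith
      have hmM : m < M := by
        have h0 := csInf_le_csSup (Set.insert_nonempty 0 (Set.range f))
          hfin.bddBelow hfin.bddAbove
        rw [hm, hM]; linarith
      have hmc : ∀ v, R.horiz v = false → m ≤ R.c v ∧ R.c v ≤ M := by
        intro v hv
        have h1 := hmf v
        simp only [hf, hv, Bool.cond_false] at h1
        exact h1
      have hmlo : ∀ v, R.horiz v = true → m ≤ R.lo v ∧ R.lo v ≤ M := by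
        intro v hv
        have h1 := hmf v
        simp only [hf, hv, Bool.cond_true] at h1
        exact h1
      set c' : V → ℝ := fun v => bif R.horiz v then R.lo v else R.c v with hc'
      set lo' : V → ℝ := fun v => bif R.horiz v then R.lo v else m with hlo'
      set hi' : V → ℝ := fun v => bif R.horiz v then R.hi v else M with hhi'
      have hlth : ∀ v, lo' v < hi' v := by
        intro v
        rcases Bool.eq_false_or_eq_true (R.horiz v) with hv | hv
        · simp only [hlo', hhi', hv, Bool.cond_true]
          exact R.lo_lt_hi v
        · simp only [hlo', hhi', hv, Bool.cond_false]
          exact hmM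
      have nd : ∀ u v : V, u ≠ v → R.horiz u = R.horiz v →
          gridSeg (R.horiz u) (c' u) (lo' u) (hi' u) ∩
            gridSeg (R.horiz v) (c' v) (lo' v) (hi' v) = ∅ := by
        intro u v huv he
        have old := R.same_disjoint u v huv he
        rw [← Set.not_nonempty_iff_eq_empty] at old ⊢
        rcases Bool.eq_false_or_eq_true (R.horiz u) with hu | hu
        · have hv : R.horiz v = true := he.symm.trans hu
          rw [hu, hv, inter_same (R.lo_lt_hi u).le (R.lo_lt_hi v).le] at old
          simp only [hc', hlo', hhi', hu, hv, Bool.cond_true]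
          rw [inter_same (R.lo_lt_hi u).le (R.lo_lt_hi v).le]
          rintro ⟨-, h2, h3⟩
          exact old ⟨(hhor u hu).trans (hhor v hv).symm, h2, h3⟩
        · have hv : R.horiz v = false := he.symm.trans hu
          rw [hu, hv] at old
          simp only [hc', hlo', hhi', hu, hv, Bool.cond_false]
          rw [inter_same hmM.le hmM.le]
          rintro ⟨h1, -, -⟩
          exact old ⟨(R.c u, t), mem_gridSeg_false.2 ⟨rfl, (hvert u hu).1, (hvert u hu).2⟩,
            mem_gridSeg_false.2 ⟨h1, (hvert v hv).1, (hvert v hv).2⟩⟩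
      refine ⟨⟨R.horiz, c', lo', hi', hlth, nd, ?_⟩, ?_⟩
      · intro u v huv
        rw [R.adj_iff u v huv]
        rcases Bool.eq_false_or_eq_true (R.horiz u) with hu | hu <;>
          rcases Bool.eq_false_or_eq_true (R.horiz v) with hv | hv
        · have e1 := R.same_disjoint u v huv (hu.trans hv.symm)
          have e2 := nd u v huv (hu.trans hv.symm)
          rw [← Set.not_nonempty_iff_eq_empty] at e1 e2
          exact iff_of_false e1 e2
        · simp only [hc', hlo', hhi', hu, hv, Bool.cond_false, Bool.cond_true]
          rw [inter_hv, inter_hv]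
          constructor
          · rintro ⟨⟨h1, h2⟩, -⟩
            exact ⟨⟨h1, h2⟩, (hmlo u hu).1, (hmlo u hu).2⟩
          · rintro ⟨⟨h1, h2⟩, -⟩
            refine ⟨⟨h1, h2⟩, ?_, ?_⟩
            · rw [hhor u hu]; exact (hvert v hv).1
            · rw [hhor u hu]; exact (hvert v hv).2
        · simp only [hc', hlo', hhi', hu, hv, Bool.cond_false, Bool.cond_true]
          rw [inter_vh, inter_vh]
          constructor
          · rintro ⟨⟨h1, h2⟩, -⟩
            exact ⟨⟨h1, h2⟩, (hmlo v hv).1, (hmlo v hv).2⟩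
          · rintro ⟨⟨h1, h2⟩, -⟩
            refine ⟨⟨h1, h2⟩, ?_, ?_⟩
            · rw [hhor v hv]; exact (hvert u hu).1
            · rw [hhor v hv]; exact (hvert u hu).2
        · have e1 := R.same_disjoint u v huv (hu.trans hv.symm)
          have e2 := nd u v huv (hu.trans hv.symm)
          rw [← Set.not_nonempty_iff_eq_empty] at e1 e2
          exact iff_of_false e1 e2
      · intro v
        rcases Bool.eq_false_or_eq_true (R.horiz v) with hv | hv
        · simp only [hc', hlo', hhi', hv, Bool.cond_true]
          exact ⟨le_rfl, (R.lo_lt_hi v).le⟩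
        · simp only [hc', hlo', hhi', hv, Bool.cond_false]
          exact hmc v hv
    · -- oblique line
      set α : ℝ := -b / a with hα'
      set β : ℝ := k / a with hβ'
      have hα : α ≠ 0 := by
        rw [hα']
        exact div_ne_zero (neg_ne_zero.2 hb) haz
      have hg : ∀ x : ℝ, α * x + β = (-b * x + k) / a := fun x => by
        rw [hα', hβ']; ring
      have ghc : ∀ v, R.horiz v = true →
          R.lo v ≤ α * R.c v + β ∧ α * R.c v + β ≤ R.hi v := by
        intro v hv
        obtain ⟨q, hq, hlin⟩ := hstab v
        rw [GridRep.seg, hv, mem_gridSeg_true] at hq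
        have : q.1 = α * R.c v + β := by
          rw [hg, eq_div_iff haz]
          linear_combination hlin - b * hq.1
        exact ⟨this ▸ hq.2.1, this ▸ hq.2.2⟩
      have gvc : ∀ v, R.horiz v = false →
          ∃ y, R.lo v ≤ y ∧ y ≤ R.hi v ∧ α * y + β = R.c v := by
        intro v hv
        obtain ⟨q, hq, hlin⟩ := hstab v
        rw [GridRep.seg, hv, mem_gridSeg_false] at hq
        refine ⟨q.2, hq.2.1, hq.2.2, ?_⟩
        rw [hg, div_eq_iff haz]
        linear_combination a * hq.1 - hlin
      set c' : V → ℝ := fun v => bif R.horiz v then α * R.c v + β else R.c v with hc'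
      set lo' : V → ℝ := fun v =>
        bif R.horiz v then R.lo v else min (α * R.lo v + β) (α * R.hi v + β) with hlo'
      set hi' : V → ℝ := fun v =>
        bif R.horiz v then R.hi v else max (α * R.lo v + β) (α * R.hi v + β) with hhi'
      have hlth : ∀ v, lo' v < hi' v := by
        intro v
        rcases Bool.eq_false_or_eq_true (R.horiz v) with hv | hv
        · simp only [hlo', hhi', hv, Bool.cond_true]
          exact R.lo_lt_hi v
        · simp only [hlo', hhi', hv, Bool.cond_false]
          exact aff_lt_minmax hα (R.lo_lt_hi v)
      have nd : ∀ u v : V, u ≠ v → R.horiz u = R.horiz v →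
          gridSeg (R.horiz u) (c' u) (lo' u) (hi' u) ∩
            gridSeg (R.horiz v) (c' v) (lo' v) (hi' v) = ∅ := by
        intro u v huv he
        have old := R.same_disjoint u v huv he
        rw [← Set.not_nonempty_iff_eq_empty] at old ⊢
        rcases Bool.eq_false_or_eq_true (R.horiz u) with hu | hu
        · have hv : R.horiz v = true := he.symm.trans hu
          rw [hu, hv, inter_same (R.lo_lt_hi u).le (R.lo_lt_hi v).le] at old
          simp only [hc', hlo', hhi', hu, hv, Bool.cond_true]
          rw [inter_same (R.lo_lt_hi u).le (R.lo_lt_hi v).le]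
          rintro ⟨h1, h2, h3⟩
          exact old ⟨aff_inj hα h1, h2, h3⟩
        · have hv : R.horiz v = false := he.symm.trans hu
          rw [hu, hv, inter_same (R.lo_lt_hi u).le (R.lo_lt_hi v).le] at old
          simp only [hc', hlo', hhi', hu, hv, Bool.cond_false]
          rw [inter_same (aff_lt_minmax hα (R.lo_lt_hi u)).le
            (aff_lt_minmax hα (R.lo_lt_hi v)).le]
          rintro ⟨h1, h2, h3⟩
          have := (aff_overlap_iff hα (R.lo_lt_hi u).le (R.lo_lt_hi v).le).1 ⟨h2, h3⟩
          exact old ⟨h1, this.1, this.2⟩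
      refine ⟨⟨R.horiz, c', lo', hi', hlth, nd, ?_⟩, ?_⟩
      · intro u v huv
        rw [R.adj_iff u v huv]
        rcases Bool.eq_false_or_eq_true (R.horiz u) with hu | hu <;>
          rcases Bool.eq_false_or_eq_true (R.horiz v) with hv | hv
        · have e1 := R.same_disjoint u v huv (hu.trans hv.symm)
          have e2 := nd u v huv (hu.trans hv.symm)
          rw [← Set.not_nonempty_iff_eq_empty] at e1 e2
          exact iff_of_false e1 e2
        · simp only [hc', hlo', hhi', hu, hv, Bool.cond_false, Bool.cond_true]
          rw [inter_hv, inter_hv]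
          constructor
          · rintro ⟨⟨h1, h2⟩, h3, h4⟩
            exact ⟨⟨h1, h2⟩, (aff_mem_iff hα (R.lo_lt_hi v).le).2 ⟨h3, h4⟩⟩
          · rintro ⟨⟨h1, h2⟩, h34⟩
            exact ⟨⟨h1, h2⟩, (aff_mem_iff hα (R.lo_lt_hi v).le).1 h34⟩
        · simp only [hc', hlo', hhi', hu, hv, Bool.cond_false, Bool.cond_true]
          rw [inter_vh, inter_vh]
          constructor
          · rintro ⟨⟨h1, h2⟩, h3, h4⟩
            exact ⟨⟨h1, h2⟩, (aff_mem_iff hα (R.lo_lt_hi u).le).2 ⟨h3, h4⟩⟩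
          · rintro ⟨⟨h1, h2⟩, h34⟩
            exact ⟨⟨h1, h2⟩, (aff_mem_iff hα (R.lo_lt_hi u).le).1 h34⟩
        · have e1 := R.same_disjoint u v huv (hu.trans hv.symm)
          have e2 := nd u v huv (hu.trans hv.symm)
          rw [← Set.not_nonempty_iff_eq_empty] at e1 e2
          exact iff_of_false e1 e2
      · intro v
        rcases Bool.eq_false_or_eq_true (R.horiz v) with hv | hv
        · simp only [hc', hlo', hhi', hv, Bool.cond_true]
          exact ghc v hv
        · obtain ⟨y, hy1, hy2, hy3⟩ := gvc v hv
          have hm := (aff_mem_iff (β := β) hα (R.lo_lt_hi v).le).2 ⟨hy1, hy2⟩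
          simp only [hc', hlo', hhi', hv, Bool.cond_false]
          rw [← hy3]
          exact hm

/-- A simple graph is a StabGIG iff it has a grid intersection representation in which the line
`y = x` meets every segment in a point `(r, r)` with `r` an integer, and every intersection
point of two distinct segments has integer coordinates. -/
theorem stabGIG_iff_good_rep {V : Type*} [Fintype V] (G : SimpleGraph V) :
    IsStabGIG G ↔
      ∃ R : GridRep G,
        (∀ v : V, ∃ r : ℤ, ((r : ℝ), (r : ℝ)) ∈ R.seg v) ∧
        (∀ u v : V, u ≠ v → ∀ q ∈ R.seg u ∩ R.seg v,
          ∃ m k : ℤ, q = ((m : ℝ), (k : ℝ))) := by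
  constructor
  · intro h
    obtain ⟨R₀, hd⟩ := stab_to_diag h
    obtain ⟨R, hD, hint⟩ := exists_int_diag R₀ hd
    refine ⟨R, ?_, ?_⟩
    · intro v
      obtain ⟨mv, hm⟩ := hint v
      refine ⟨mv, ?_⟩
      rw [GridRep.seg]
      rcases Bool.eq_false_or_eq_true (R.horiz v) with hv | hv
      · rw [hv, mem_gridSeg_true]
        exact ⟨hm.symm, hm ▸ (hD v).1, hm ▸ (hD v).2⟩
      · rw [hv, mem_gridSeg_false]
        exact ⟨hm.symm, hm ▸ (hD v).1, hm ▸ (hD v).2⟩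
    · intro u v huv q hq
      obtain ⟨hq1, hq2⟩ := hq
      by_cases he : R.horiz u = R.horiz v
      · have := R.same_disjoint u v huv he
        rw [GridRep.seg] at hq1 hq2
        have : q ∈ (∅ : Set (ℝ × ℝ)) := this ▸ Set.mem_inter hq1 hq2
        exact absurd this (Set.notMem_empty q)
      · obtain ⟨mu, hmu⟩ := hint u
        obtain ⟨mv, hmv⟩ := hint v
        rcases Bool.eq_false_or_eq_true (R.horiz u) with hu | hu
        · have hv : R.horiz v = false := by
            rcases Bool.eq_false_or_eq_true (R.horiz v) with h' | h'
            · exact absurd (hu.trans h'.symm) he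
            · exact h'
          rw [GridRep.seg, hu, mem_gridSeg_true] at hq1
          rw [GridRep.seg, hv, mem_gridSeg_false] at hq2
          refine ⟨mv, mu, ?_⟩
          rw [Prod.ext_iff]
          exact ⟨hq2.1.trans hmv, hq1.1.trans hmu⟩
        · have hv : R.horiz v = true := by
            rcases Bool.eq_false_or_eq_true (R.horiz v) with h' | h'
            · exact h'
            · exact absurd (hu.trans h'.symm) he
          rw [GridRep.seg, hu, mem_gridSeg_false] at hq1
          rw [GridRep.seg, hv, mem_gridSeg_true] at hq2
          refine ⟨mu, mv, ?_⟩
          rw [Prod.ext_iff]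
          exact ⟨hq1.1.trans hmu, hq2.1.trans hmv⟩
  · rintro ⟨R, h1, _⟩
    refine ⟨R, 1, -1, 0, Or.inl one_ne_zero, ?_⟩
    intro v
    obtain ⟨r, hr⟩ := h1 v
    exact ⟨((r : ℝ), (r : ℝ)), hr, by ring⟩
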